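/- With V, ⟨·,·⟩₁, 𝔗 as above, there exists a constant c > 0 such that c ‖w‖ dist(v, ∂𝔗) ≤ |⟨v,w⟩₁| for all v, w ∈ 𝔗. -/

import Mathlib

set_option maxHeartbeats 1600000 in
theorem stmt_7 (V : Type*) [NormedAddCommGroup V] [NormedSpace ℝ V]
    [FiniteDimensional ℝ V] (B : LinearMap.BilinForm ℝ V)
    (hsymm : ∀ x y : V, B x y = B y x)
    (e : V) (he : B e e < 0)
    (hpos : ∀ v : V, B e v = 0 → v ≠ 0 → 0 < B v v) :
    ∃ c > (0:ℝ), ∀ v ∈ {v : V | B v v ≤ 0 ∧ B v e ≤ 0},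
      ∀ w ∈ {v : V | B v v ≤ 0 ∧ B v e ≤ 0},
      c * ‖w‖ * Metric.infDist v (frontier {v : V | B v v ≤ 0 ∧ B v e ≤ 0})
        ≤ |B v w| := by
  classical
  set S : Set V := {v : V | B v v ≤ 0 ∧ B v e ≤ 0} with hS
  -- nondegeneracy
  have hnd : ∀ v : V, (∀ x : V, B v x = 0) → v = 0 := by
    intro v hv
    by_contra hv0
    have h1 : B e v = 0 := by rw [← hsymm]; exact hv e
    have := hpos v h1 hv0
    rw [hv v] at this
    exact lt_irrefl 0 this
  -- orthogonal complement of a timelike vector is spacelike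
  have hperp : ∀ p : V, B p p < 0 → ∀ x : V, B p x = 0 → x ≠ 0 → 0 < B x x := by
    intro p hp x hpx hx0
    have hp0 : p ≠ 0 := by
      intro h; rw [h] at hp; simp at hp
    have hep : B e p ≠ 0 := by
      intro h
      exact absurd (hpos p h hp0) (not_lt.2 hp.le)
    by_contra hxx
    push_neg at hxx
    set a := B e x with ha
    set b := B e p with hb
    set z := a • p - b • x with hz
    have hez : B e z = 0 := by
      simp [hz, map_smul, smul_eq_mul]; ring
    have hz0 : z ≠ 0 := by
      intro h
      have h2 : a • p = b • x := by
        have := sub_eq_zero.mp (hz ▸ h)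
        exact this
      have h3 : a * B p p = b * B p x := by
        have := congrArg (fun y => B p y) h2
        simpa [map_smul, smul_eq_mul] using this
      rw [hpx, mul_zero] at h3
      have ha0 : a = 0 := by
        rcases mul_eq_zero.mp h3 with h | h
        · exact h
        · exact absurd h hp.ne
      rw [ha0, zero_smul] at h2
      have : x = 0 := by
        rcases smul_eq_zero.mp h2.symm with h | h
        · exact absurd h hep
        · exact h
      exact hx0 this
    have hzz := hpos z hez hz0
    have hxp : B x p = 0 := by rw [hsymm]; exact hpx
    have hexp : B z z = a^2 * B p p + b^2 * B x x := by
      simp [hz, map_sub, map_smul, smul_eq_mul, hpx, hxp]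
      ring
    nlinarith [sq_nonneg a, sq_nonneg b, mul_pos (mul_self_pos.2 hep) (neg_pos.2 hp)]
  -- interior of the cone consists of timelike vectors
  have hint : ∀ v ∈ interior S, B v v < 0 := by
    intro v hv
    have hvS : v ∈ S := interior_subset hv
    rcases lt_or_eq_of_le hvS.1 with h | h
    · exact h
    -- B v v = 0
    exfalso
    rcases Metric.mem_nhds_iff.mp (mem_interior_iff_mem_nhds.mp hv) with ⟨ε, hε, hball⟩
    by_cases hv0 : v = 0
    · -- 0 is not in the interior: -t e escapes
      subst hv0
      have he0 : e ≠ 0 := by intro h; rw [h] at he; simp at he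
      have hne : 0 < ‖e‖ := norm_pos_iff.2 he0
      set t : ℝ := ε / (2 * ‖e‖) with ht
      have ht0 : 0 < t := div_pos hε (by positivity)
      have hmem : (-t) • e ∈ Metric.ball (0:V) ε := by
        simp only [Metric.mem_ball, dist_zero_right, norm_smul, norm_neg, Real.norm_eq_abs,
          abs_of_pos ht0]
        rw [ht]
        rw [div_mul_eq_mul_div]
        rw [div_lt_iff₀ (by positivity)]
        nlinarith
      have := (hball hmem).2
      simp only [hS, Set.mem_setOf_eq, map_smul, LinearMap.smul_apply, smul_eq_mul] at this
      nlinarith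
    · obtain ⟨u, hu⟩ : ∃ u, B v u ≠ 0 := by
        by_contra hcon
        push_neg at hcon
        exact hv0 (hnd v hcon)
      set c1 := B v u with hc1
      have hu0 : u ≠ 0 := by
        intro h
        apply hu
        rw [hc1, h]
        simp
      have hnu : 0 < ‖u‖ := norm_pos_iff.2 hu0
      set δ : ℝ := min (ε / (|c1| * ‖u‖ + 1)) (1 / (|B u u| + 1)) / 2 with hδ
      have hδ0 : 0 < δ := by
        apply div_pos _ two_pos
        apply lt_min
        · positivity
        · positivity
      have hδ1 : δ * (|c1| * ‖u‖) < ε := by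
        have h1 : δ ≤ ε / (|c1| * ‖u‖ + 1) / 2 := by
          rw [hδ]; gcongr; exact min_le_left _ _
        have h2 : 0 < |c1| * ‖u‖ + 1 := by positivity
        calc δ * (|c1| * ‖u‖) ≤ ε / (|c1| * ‖u‖ + 1) / 2 * (|c1| * ‖u‖) := by
              apply mul_le_mul_of_nonneg_right h1 (by positivity)
          _ < ε := by
              rw [div_div, div_mul_eq_mul_div, div_lt_iff₀ (by positivity)]
              nlinarith [abs_nonneg c1, norm_nonneg u, mul_nonneg (abs_nonneg c1) (norm_nonneg u)]
      have hδ2 : δ * |B u u| < 2 := by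
        have h1 : δ ≤ 1 / (|B u u| + 1) / 2 := by
          rw [hδ]; gcongr; exact min_le_right _ _
        calc δ * |B u u| ≤ 1 / (|B u u| + 1) / 2 * |B u u| := by
              apply mul_le_mul_of_nonneg_right h1 (abs_nonneg _)
          _ < 2 := by
              rw [div_div, div_mul_eq_mul_div, div_lt_iff₀ (by positivity)]
              nlinarith [abs_nonneg (B u u)]
      set t : ℝ := c1 * δ with htdef
      have hmem : v + t • u ∈ Metric.ball v ε := by
        simp only [Metric.mem_ball, dist_eq_norm, add_sub_cancel_left, norm_smul,
          Real.norm_eq_abs]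
        rw [htdef, abs_mul, abs_of_pos hδ0]
        calc |c1| * δ * ‖u‖ = δ * (|c1| * ‖u‖) := by ring
          _ < ε := hδ1
      have hle := (hball hmem).1
      try simp only [hS, Set.mem_setOf_eq] at hle
      have huv : B u v = c1 := hsymm u v
      have hexp : B (v + t • u) (v + t • u) = 2 * t * c1 + t^2 * B u u := by
        have e1 : B (v + t • u) (v + t • u)
            = B v v + t * B v u + (t * B u v + t * (t * B u u)) := by
          simp only [map_add, LinearMap.add_apply, map_smul, LinearMap.smul_apply,
            smul_eq_mul]
          ring
        rw [e1, h, huv, ← hc1]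
        ring
      rw [hexp, htdef] at hle
      have hc1sq : 0 < c1^2 := by positivity
      have habs : -(δ * |B u u|) ≤ δ * B u u := by
        have := neg_abs_le (B u u)
        nlinarith
      have h3 : 0 < 2 + δ * B u u := by nlinarith
      nlinarith [mul_pos (mul_pos hc1sq hδ0) h3]
  -- distance to the frontier is at most the distance to any B-orthogonal point of w
  have hdistle : ∀ w ∈ S, w ≠ 0 → ∀ v ∈ S, ∀ p : V, B w p = 0 →
      Metric.infDist v (frontier S) ≤ dist v p := by
    intro w hw hw0 v hv p hp
    by_contra hcon
    push_neg at hcon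
    set r := dist v p with hr
    have hvint : v ∈ interior S := by
      have hvf : v ∉ frontier S := by
        intro hvf
        have : Metric.infDist v (frontier S) ≤ 0 := by
          simpa using Metric.infDist_le_dist_of_mem (x := v) hvf
        have : r < 0 := lt_of_lt_of_le hcon this
        exact absurd this (not_lt.2 dist_nonneg)
      rcases (em (v ∈ interior S)) with h | h
      · exact h
      · exact absurd ⟨subset_closure hv, h⟩ hvf
    have hsub : Metric.closedBall v r ⊆ interior S ∪ (closure S)ᶜ := by
      intro x hx
      by_contra hxcon
      try push_neg at hxcon
      rw [Set.mem_union, not_or] at hxcon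
      have hxf : x ∈ frontier S := ⟨not_not.mp hxcon.2, hxcon.1⟩
      have h1 : Metric.infDist v (frontier S) ≤ dist v x :=
        Metric.infDist_le_dist_of_mem hxf
      have h2 : dist v x ≤ r := by rwa [Metric.mem_closedBall, dist_comm] at hx
      linarith
    have hdisj : Disjoint (interior S) ((closure S)ᶜ : Set V) :=
      disjoint_compl_right.mono_left interior_subset_closure
    have hconn := (convex_closedBall v r).isPreconnected
    rcases hconn.subset_or_subset isOpen_interior isClosed_closure.isOpen_compl hdisj hsub with
      h | h
    · have hpmem : p ∈ Metric.closedBall v r := by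
        rw [Metric.mem_closedBall, dist_comm]
      have hpint := h hpmem
      have hpp := hint p hpint
      have hpw : B p w = 0 := by rw [hsymm]; exact hp
      have := hperp p hpp w hpw hw0
      exact absurd this (not_lt.2 hw.1)
    · have hvmem : v ∈ Metric.closedBall v r := Metric.mem_closedBall_self dist_nonneg
      exact (h hvmem) (subset_closure hv)
  -- the continuous linear version of B and the antilipschitz constant
  set L : V →ₗ[ℝ] (V →L[ℝ] ℝ) :=
    (LinearMap.toContinuousLinearMap :
      (V →ₗ[ℝ] ℝ) ≃ₗ[ℝ] (V →L[ℝ] ℝ)).toLinearMap.comp B with hL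
  have hLapp : ∀ w y : V, L w y = B w y := by
    intro w y
    simp [hL]
  have hLker : LinearMap.ker L = ⊥ := by
    rw [LinearMap.ker_eq_bot]
    intro x y hxy
    have h0 : x - y = 0 := by
      apply hnd (x - y)
      intro z
      have hz : L x z = L y z := by rw [hxy]
      rw [hLapp, hLapp] at hz
      simp only [map_sub, LinearMap.sub_apply, sub_eq_zero]
      exact hz
    exact sub_eq_zero.mp h0
  obtain ⟨K, hK0, hK⟩ := L.exists_antilipschitzWith hLker
  have hKb : ∀ w : V, ‖w‖ ≤ (K : ℝ) * ‖L w‖ := by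
    intro w
    have := hK.le_mul_dist w 0
    simpa [dist_zero_right, map_zero] using this
  refine ⟨(K : ℝ)⁻¹, by positivity, ?_⟩
  intro v hv w hw
  by_cases hw0 : w = 0
  · simp [hw0]
  set d := Metric.infDist v (frontier S) with hd
  have hd0 : 0 ≤ d := Metric.infDist_nonneg
  have hLwd : ‖L w‖ * d ≤ |B v w| := by
    rcases eq_or_lt_of_le hd0 with h | h
    · rw [← h, mul_zero]; exact abs_nonneg _
    · rw [← le_div_iff₀ h]
      apply ContinuousLinearMap.opNorm_le_bound _ (by positivity)
      intro y
      rw [hLapp, Real.norm_eq_abs, div_mul_eq_mul_div, le_div_iff₀ h]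
      by_cases hy : B w y = 0
      · simp only [hy, abs_zero, zero_mul]
        positivity
      · set p := v - (B w v / B w y) • y with hpdef
        have hwp : B w p = 0 := by
          simp only [hpdef, map_sub, map_smul, smul_eq_mul]
          field_simp; try simp
        have h1 : d ≤ dist v p := hdistle w hw hw0 v hv p hwp
        have h2 : dist v p = |B w v| / |B w y| * ‖y‖ := by
          rw [dist_eq_norm, hpdef, sub_sub_cancel, norm_smul, Real.norm_eq_abs, abs_div]
        have hwv : B w v = B v w := hsymm w v
        have hby : 0 < |B w y| := abs_pos.2 hy
        rw [h2, hwv] at h1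
        calc |B w y| * d ≤ |B w y| * (|B v w| / |B w y| * ‖y‖) := by
              apply mul_le_mul_of_nonneg_left h1 (abs_nonneg _)
          _ = |B v w| * ‖y‖ := by field_simp
  calc (K:ℝ)⁻¹ * ‖w‖ * d ≤ ‖L w‖ * d := by
        apply mul_le_mul_of_nonneg_right _ hd0
        rw [inv_mul_le_iff₀ (by exact_mod_cast hK0)]
        exact hKb w
    _ ≤ |B v w| := hLwd
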